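/- The ratio of the number of labeled connected (undirected) graphs on n vertices to the number of all labeled graphs on n vertices tends to 1 as n tends to infinity. -/

import Mathlib

open Filter

open Finset in
/-- A cut `S` with no edges across it. -/
def CrossFree {n : ℕ} (S : Finset (Fin n)) (G : SimpleGraph (Fin n)) : Prop :=
  ∀ a b, a ∈ S → b ∉ S → ¬ G.Adj a b

open Finset in
lemma exists_cut {n : ℕ} (hn : n ≠ 0) (G : SimpleGraph (Fin n)) (hG : ¬ G.Connected) :
    ∃ S : Finset (Fin n), S.Nonempty ∧ 2 * S.card ≤ n ∧ CrossFree S G := by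
  classical
  have hne : Nonempty (Fin n) := ⟨⟨0, Nat.pos_of_ne_zero hn⟩⟩
  have hpre : ¬ G.Preconnected := by
    intro h; exact hG ⟨h⟩
  rw [SimpleGraph.Preconnected] at hpre
  push_neg at hpre
  obtain ⟨u, w, huw⟩ := hpre
  set T : Finset (Fin n) := univ.filter (fun x => G.Reachable u x) with hT
  have hmemT : ∀ x, x ∈ T ↔ G.Reachable u x := by
    intro x; simp [hT]
  have hcfT : CrossFree T G := by
    intro a b ha hb hadj
    have h1 : G.Reachable u a := (hmemT a).1 ha
    have h2 : G.Reachable u b := h1.trans (SimpleGraph.Adj.reachable hadj)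
    exact hb ((hmemT b).2 h2)
  have huT : u ∈ T := (hmemT u).2 (SimpleGraph.Reachable.refl u)
  have hwT : w ∉ T := fun h => huw ((hmemT w).1 h)
  have hTcard : T.card ≤ n := by
    simpa using card_le_card (subset_univ T)
  by_cases h2 : 2 * T.card ≤ n
  · exact ⟨T, ⟨u, huT⟩, h2, hcfT⟩
  · refine ⟨Tᶜ, ⟨w, mem_compl.2 hwT⟩, ?_, ?_⟩
    · have : Tᶜ.card = n - T.card := by
        simp [card_compl]
      omega
    · intro a b ha hb hadj
      have hbT : b ∈ T := by simpa using hb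
      have haT : a ∉ T := by simpa using ha
      exact hcfT b a hbT haT hadj.symm

open Finset in
/-- Counting graphs with a given cross-free cut. -/
lemma crossFree_count {n : ℕ} (S : Finset (Fin n)) :
    Nat.card {G : SimpleGraph (Fin n) // CrossFree S G} *
      2 ^ (S.card * (n - S.card)) ≤ Nat.card (SimpleGraph (Fin n)) := by
  classical
  -- injection from (cross-free graphs) × (functions on S × Sᶜ) into all graphs
  set Ψ : {G : SimpleGraph (Fin n) // CrossFree S G} × ((↥S × ↥(Sᶜ)) → Bool) → SimpleGraph (Fin n) :=
    fun p =>
      { Adj := fun a b => p.1.1.Adj a b ∨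
          (∃ (ha : a ∈ S) (hb : b ∈ Sᶜ), p.2 (⟨a, ha⟩, ⟨b, hb⟩) = true) ∨
          (∃ (hb : b ∈ S) (ha : a ∈ Sᶜ), p.2 (⟨b, hb⟩, ⟨a, ha⟩) = true)
        symm := by
          constructor
          intro a b h
          rcases h with h | h | h
          · exact Or.inl h.symm
          · exact Or.inr (Or.inr h)
          · exact Or.inr (Or.inl h)
        loopless := by
          constructor
          intro a h
          rcases h with h | ⟨ha, hb, _⟩ | ⟨ha, hb, _⟩
          · exact p.1.1.loopless.irrefl a h
          · exact (mem_compl.1 hb) ha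
          · exact (mem_compl.1 hb) ha } with hΨ
  have hAdj : ∀ p a b, (Ψ p).Adj a b ↔ (p.1.1.Adj a b ∨
      (∃ (ha : a ∈ S) (hb : b ∈ Sᶜ), p.2 (⟨a, ha⟩, ⟨b, hb⟩) = true) ∨
      (∃ (hb : b ∈ S) (ha : a ∈ Sᶜ), p.2 (⟨b, hb⟩, ⟨a, ha⟩) = true)) := by
    intro p a b; rfl
  have hinj : Function.Injective Ψ := by
    rintro ⟨⟨G, hG⟩, g⟩ ⟨⟨G', hG'⟩, g'⟩ h
    have hadj : ∀ a b, (Ψ (⟨⟨G, hG⟩, g⟩)).Adj a b ↔ (Ψ (⟨⟨G', hG'⟩, g'⟩)).Adj a b := by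
      intro a b; rw [h]
    -- characterize g via Ψ
    have hg : ∀ (G₀ : SimpleGraph (Fin n)) (hG₀ : CrossFree S G₀) (g₀ : (↥S × ↥(Sᶜ)) → Bool)
        (a b : Fin n) (ha : a ∈ S) (hb : b ∈ Sᶜ),
        ((Ψ (⟨⟨G₀, hG₀⟩, g₀⟩)).Adj a b ↔ g₀ (⟨a, ha⟩, ⟨b, hb⟩) = true) := by
      intro G₀ hG₀ g₀ a b ha hb
      rw [hAdj]
      constructor
      · rintro (h | ⟨ha', hb', h⟩ | ⟨hb', ha', h⟩)
        · exact absurd h (hG₀ a b ha (mem_compl.1 hb))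
        · exact h
        · exact absurd hb' (mem_compl.1 hb)
      · intro h
        exact Or.inr (Or.inl ⟨ha, hb, h⟩)
    have hgg : g = g' := by
      funext q
      obtain ⟨⟨a, ha⟩, ⟨b, hb⟩⟩ := q
      have h1 := (hg G hG g a b ha hb).symm
      have h2 := hg G' hG' g' a b ha hb
      have := (h1.trans (hadj a b)).trans h2
      cases hgq : g (⟨a, ha⟩, ⟨b, hb⟩) <;> cases hgq' : g' (⟨a, ha⟩, ⟨b, hb⟩) <;>
        simp_all
    have hGG : G = G' := by
      ext a b
      by_cases ha : a ∈ S <;> by_cases hb : b ∈ S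
      · -- no cross membership, second and third disjuncts vacuous
        have := hadj a b
        rw [hAdj, hAdj] at this
        have hb' : b ∉ Sᶜ := fun h => (mem_compl.1 h) hb
        have ha' : a ∉ Sᶜ := fun h => (mem_compl.1 h) ha
        constructor
        · intro h
          rcases this.1 (Or.inl h) with h' | ⟨_, h', _⟩ | ⟨_, h', _⟩
          · exact h'
          · exact absurd h' hb'
          · exact absurd h' ha'
        · intro h
          rcases this.2 (Or.inl h) with h' | ⟨_, h', _⟩ | ⟨_, h', _⟩
          · exact h'
          · exact absurd h' hb'
          · exact absurd h' ha'
      · constructor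
        · intro h; exact absurd h (hG a b ha hb)
        · intro h; exact absurd h (hG' a b ha hb)
      · constructor
        · intro h; exact absurd h.symm (hG b a hb ha)
        · intro h; exact absurd h.symm (hG' b a hb ha)
      · have := hadj a b
        rw [hAdj, hAdj] at this
        have hb' : b ∈ Sᶜ := mem_compl.2 hb
        have ha' : a ∈ Sᶜ := mem_compl.2 ha
        constructor
        · intro h
          rcases this.1 (Or.inl h) with h' | ⟨h', _, _⟩ | ⟨h', _, _⟩
          · exact h'
          · exact absurd h' ha
          · exact absurd h' hb
        · intro h
          rcases this.2 (Or.inl h) with h' | ⟨h', _, _⟩ | ⟨h', _, _⟩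
          · exact h'
          · exact absurd h' ha
          · exact absurd h' hb
    cases hGG
    cases hgg
    rfl
  have hcard := Fintype.card_le_of_injective Ψ hinj
  rw [Fintype.card_prod] at hcard
  have hIcard : Fintype.card ((↥S × ↥(Sᶜ)) → Bool) = 2 ^ (S.card * (n - S.card)) := by
    rw [Fintype.card_fun, Fintype.card_prod, Fintype.card_bool, Fintype.card_coe,
      Fintype.card_coe, card_compl]
    simp
  rw [Nat.card_eq_fintype_card, Nat.card_eq_fintype_card]
  rw [hIcard] at hcard
  exact hcard

open Finset in
lemma disconnected_bound (n : ℕ) (hn : n ≠ 0) :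
    (Nat.card {G : SimpleGraph (Fin n) // ¬ G.Connected} : ℝ) ≤
      (Nat.card (SimpleGraph (Fin n)) : ℝ) *
        ((1 + (1/2 : ℝ) ^ (n - n/2)) ^ n - 1) := by
  classical
  set y : ℝ := (1/2 : ℝ) ^ (n - n/2) with hy
  have hy0 : 0 ≤ y := by positivity
  set 𝒮 : Finset (Finset (Fin n)) :=
    univ.filter (fun S : Finset (Fin n) => S.Nonempty ∧ 2 * S.card ≤ n) with h𝒮
  -- step 1 : union bound over cuts
  have hsub : univ.filter (fun G : SimpleGraph (Fin n) => ¬ G.Connected) ⊆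
      𝒮.biUnion (fun S => univ.filter (fun G : SimpleGraph (Fin n) => CrossFree S G)) := by
    intro G hG
    have hGc : ¬ G.Connected := (mem_filter.1 hG).2
    obtain ⟨S, hS1, hS2, hS3⟩ := exists_cut hn G hGc
    exact mem_biUnion.2 ⟨S, mem_filter.2 ⟨mem_univ _, hS1, hS2⟩,
      mem_filter.2 ⟨mem_univ _, hS3⟩⟩
  have hunion : Nat.card {G : SimpleGraph (Fin n) // ¬ G.Connected} ≤
      ∑ S ∈ 𝒮, (univ.filter (fun G : SimpleGraph (Fin n) => CrossFree S G)).card := by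
    rw [Nat.card_eq_fintype_card, Fintype.card_subtype]
    exact le_trans (card_le_card hsub) (card_biUnion_le)
  -- step 2 : per-cut bound, in ℝ
  have htot : (0:ℝ) < (Nat.card (SimpleGraph (Fin n)) : ℝ) := by
    have : 0 < Nat.card (SimpleGraph (Fin n)) := Nat.card_pos
    exact_mod_cast this
  have hcut : ∀ S ∈ 𝒮,
      ((univ.filter (fun G : SimpleGraph (Fin n) => CrossFree S G)).card : ℝ) ≤
        (Nat.card (SimpleGraph (Fin n)) : ℝ) * y ^ S.card := by
    intro S hS
    obtain ⟨-, hS1, hS2⟩ := mem_filter.1 hS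
    have hcount := crossFree_count S
    rw [Nat.card_eq_fintype_card, Fintype.card_subtype] at hcount
    have hcast : ((univ.filter (fun G : SimpleGraph (Fin n) => CrossFree S G)).card : ℝ) *
        2 ^ (S.card * (n - S.card)) ≤ (Nat.card (SimpleGraph (Fin n)) : ℝ) := by
      exact_mod_cast hcount
    have h1 : ((univ.filter (fun G : SimpleGraph (Fin n) => CrossFree S G)).card : ℝ) ≤
        (Nat.card (SimpleGraph (Fin n)) : ℝ) * (1/2 : ℝ) ^ (S.card * (n - S.card)) := by
      rw [div_pow, one_pow, mul_div_assoc', mul_one, le_div_iff₀ (by positivity)]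
      exact hcast
    refine h1.trans ?_
    have hexp : (n - n/2) * S.card ≤ S.card * (n - S.card) := by
      have hk : S.card ≤ n/2 := by omega
      calc (n - n/2) * S.card ≤ (n - S.card) * S.card :=
            Nat.mul_le_mul_right _ (Nat.sub_le_sub_left hk n)
        _ = S.card * (n - S.card) := Nat.mul_comm _ _
    have : (1/2 : ℝ) ^ (S.card * (n - S.card)) ≤ y ^ S.card := by
      rw [hy, ← pow_mul]
      exact pow_le_pow_of_le_one (by norm_num) (by norm_num) hexp
    exact mul_le_mul_of_nonneg_left this htot.le
  -- step 3 : sum the geometric-type bound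
  have hsum2 : ∑ S ∈ 𝒮, y ^ S.card ≤ (1 + y) ^ n - 1 := by
    have hall : ∑ S : Finset (Fin n), y ^ S.card = (y + 1) ^ n := by
      have h := Finset.prod_add (fun _ : Fin n => y) (fun _ : Fin n => 1) univ
      simp only [prod_const, prod_const_one, one_pow, mul_one, card_univ,
        Fintype.card_fin, powerset_univ] at h
      exact h.symm
    have hins : (1:ℝ) + ∑ S ∈ 𝒮, y ^ S.card ≤ ∑ S : Finset (Fin n), y ^ S.card := by
      have hnm : ∅ ∉ 𝒮 := by
        simp [h𝒮]
      have : ∑ S ∈ insert ∅ 𝒮, y ^ S.card = 1 + ∑ S ∈ 𝒮, y ^ S.card := by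
        rw [sum_insert hnm]; simp
      rw [← this]
      refine sum_le_sum_of_subset_of_nonneg (subset_univ _) ?_
      intro i _ _; positivity
    have h1y : (y + 1) ^ n = (1 + y) ^ n := by ring_nf
    linarith [hall ▸ hins, h1y ▸ le_refl ((y+1)^n)]
  -- assemble
  calc (Nat.card {G : SimpleGraph (Fin n) // ¬ G.Connected} : ℝ)
      ≤ ∑ S ∈ 𝒮, ((univ.filter (fun G : SimpleGraph (Fin n) => CrossFree S G)).card : ℝ) := by
        exact_mod_cast hunion
    _ ≤ ∑ S ∈ 𝒮, (Nat.card (SimpleGraph (Fin n)) : ℝ) * y ^ S.card := sum_le_sum hcut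
    _ = (Nat.card (SimpleGraph (Fin n)) : ℝ) * ∑ S ∈ 𝒮, y ^ S.card := by
        rw [mul_sum]
    _ ≤ (Nat.card (SimpleGraph (Fin n)) : ℝ) * ((1 + y) ^ n - 1) :=
        mul_le_mul_of_nonneg_left hsum2 htot.le

lemma aux_tendsto_zero :
    Tendsto (fun n : ℕ => (n : ℝ) * (1/2 : ℝ) ^ (n - n/2)) atTop (nhds 0) := by
  have hf : Tendsto (fun m : ℕ => (2 * (m:ℝ) + 1) * (1/2 : ℝ) ^ m) atTop (nhds 0) := by
    have h1 : Tendsto (fun m : ℕ => (m:ℝ) * (1/2 : ℝ) ^ m) atTop (nhds 0) := by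
      simpa using tendsto_pow_const_mul_const_pow_of_lt_one 1
        (by norm_num : (0:ℝ) ≤ 1/2) (by norm_num : (1/2:ℝ) < 1)
    have h2 : Tendsto (fun m : ℕ => (1/2 : ℝ) ^ m) atTop (nhds 0) :=
      tendsto_pow_atTop_nhds_zero_of_lt_one (by norm_num) (by norm_num)
    have h3 := (h1.const_mul 2).add h2
    simp only [mul_zero, add_zero, zero_add] at h3
    refine h3.congr (fun m => by ring)
  have hdiv : Tendsto (fun n : ℕ => n / 2) atTop atTop :=
    (map_div_atTop_eq_nat 2 (by norm_num)).le
  have hu : Tendsto (fun n : ℕ => (2 * ((n/2 : ℕ):ℝ) + 1) * (1/2 : ℝ) ^ (n/2))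
      atTop (nhds 0) := hf.comp hdiv
  refine squeeze_zero (fun n => by positivity) (fun n => ?_) hu
  have hle1 : ((1:ℝ)/2) ^ (n - n/2) ≤ (1/2 : ℝ) ^ (n/2) :=
    pow_le_pow_of_le_one (by norm_num) (by norm_num) (by omega)
  have hle2 : (n : ℝ) ≤ 2 * ((n/2 : ℕ):ℝ) + 1 := by
    have : n ≤ 2 * (n/2) + 1 := by omega
    exact_mod_cast this
  calc (n : ℝ) * (1/2 : ℝ) ^ (n - n/2)
      ≤ (n : ℝ) * (1/2 : ℝ) ^ (n/2) := by
        exact mul_le_mul_of_nonneg_left hle1 (by positivity)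
    _ ≤ (2 * ((n/2 : ℕ):ℝ) + 1) * (1/2 : ℝ) ^ (n/2) :=
        mul_le_mul_of_nonneg_right hle2 (by positivity)

lemma bound_tendsto_zero :
    Tendsto (fun n : ℕ => (1 + (1/2 : ℝ) ^ (n - n/2)) ^ n - 1) atTop (nhds 0) := by
  have hexp : Tendsto (fun n : ℕ => Real.exp ((n : ℝ) * (1/2 : ℝ) ^ (n - n/2)) - 1)
      atTop (nhds 0) := by
    have := (Real.continuous_exp.continuousAt (x := (0:ℝ))).tendsto.comp aux_tendsto_zero
    have h2 := this.sub (tendsto_const_nhds :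
      Tendsto (fun _ : ℕ => (1:ℝ)) atTop (nhds 1))
    simpa using h2
  refine squeeze_zero (fun n => ?_) (fun n => ?_) hexp
  · have h1 : (1:ℝ) ≤ (1 + (1/2 : ℝ) ^ (n - n/2)) ^ n := by
      refine one_le_pow₀ ?_
      have : (0:ℝ) ≤ (1/2 : ℝ) ^ (n - n/2) := by positivity
      linarith
    linarith
  · have hy0 : (0:ℝ) ≤ (1/2 : ℝ) ^ (n - n/2) := by positivity
    have h1 : (1 + (1/2 : ℝ) ^ (n - n/2)) ^ n ≤
        Real.exp ((n : ℝ) * (1/2 : ℝ) ^ (n - n/2)) := by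
      have h2 : (1 + (1/2 : ℝ) ^ (n - n/2)) ≤ Real.exp ((1/2 : ℝ) ^ (n - n/2)) := by
        have := Real.add_one_le_exp ((1/2 : ℝ) ^ (n - n/2))
        linarith
      calc (1 + (1/2 : ℝ) ^ (n - n/2)) ^ n
          ≤ (Real.exp ((1/2 : ℝ) ^ (n - n/2))) ^ n :=
            pow_le_pow_left₀ (by linarith) h2 n
        _ = Real.exp ((n : ℝ) * (1/2 : ℝ) ^ (n - n/2)) :=
            (Real.exp_nat_mul _ n).symm
    linarith

theorem connected_graphs_ratio_tendsto_one :
    Tendsto (fun n : ℕ =>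
        (Nat.card {G : SimpleGraph (Fin n) // G.Connected} : ℝ) /
          (Nat.card (SimpleGraph (Fin n)) : ℝ)) atTop (nhds 1) := by
  classical
  have htot : ∀ n : ℕ, (0:ℝ) < (Nat.card (SimpleGraph (Fin n)) : ℝ) := by
    intro n
    have : 0 < Nat.card (SimpleGraph (Fin n)) := Nat.card_pos
    exact_mod_cast this
  have key : ∀ n : ℕ,
      (Nat.card {G : SimpleGraph (Fin n) // G.Connected} : ℝ) /
        (Nat.card (SimpleGraph (Fin n)) : ℝ) =
      1 - (Nat.card {G : SimpleGraph (Fin n) // ¬ G.Connected} : ℝ) /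
        (Nat.card (SimpleGraph (Fin n)) : ℝ) := by
    intro n
    have hcompl : Nat.card {G : SimpleGraph (Fin n) // ¬ G.Connected} =
        Nat.card (SimpleGraph (Fin n)) -
          Nat.card {G : SimpleGraph (Fin n) // G.Connected} := by
      simp only [Nat.card_eq_fintype_card]
      exact Fintype.card_subtype_compl _
    have hle : Nat.card {G : SimpleGraph (Fin n) // G.Connected} ≤
        Nat.card (SimpleGraph (Fin n)) := by
      simp only [Nat.card_eq_fintype_card]
      exact Fintype.card_subtype_le _
    have hcast : (Nat.card {G : SimpleGraph (Fin n) // ¬ G.Connected} : ℝ) =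
        (Nat.card (SimpleGraph (Fin n)) : ℝ) -
          (Nat.card {G : SimpleGraph (Fin n) // G.Connected} : ℝ) := by
      rw [hcompl, Nat.cast_sub hle]
    rw [hcast, sub_div, div_self (htot n).ne']
    ring
  have hub : ∀ n : ℕ,
      (Nat.card {G : SimpleGraph (Fin n) // G.Connected} : ℝ) /
        (Nat.card (SimpleGraph (Fin n)) : ℝ) ≤ 1 := by
    intro n
    rw [key n]
    have : (0:ℝ) ≤ (Nat.card {G : SimpleGraph (Fin n) // ¬ G.Connected} : ℝ) /
        (Nat.card (SimpleGraph (Fin n)) : ℝ) := by positivity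
    linarith
  have hlb : ∀ n : ℕ, n ≠ 0 →
      1 - ((1 + (1/2 : ℝ) ^ (n - n/2)) ^ n - 1) ≤
        (Nat.card {G : SimpleGraph (Fin n) // G.Connected} : ℝ) /
          (Nat.card (SimpleGraph (Fin n)) : ℝ) := by
    intro n hn
    rw [key n]
    have hd := disconnected_bound n hn
    have : (Nat.card {G : SimpleGraph (Fin n) // ¬ G.Connected} : ℝ) /
        (Nat.card (SimpleGraph (Fin n)) : ℝ) ≤
        (1 + (1/2 : ℝ) ^ (n - n/2)) ^ n - 1 := by
      rw [div_le_iff₀ (htot n)]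
      calc (Nat.card {G : SimpleGraph (Fin n) // ¬ G.Connected} : ℝ)
          ≤ (Nat.card (SimpleGraph (Fin n)) : ℝ) *
              ((1 + (1/2 : ℝ) ^ (n - n/2)) ^ n - 1) := hd
        _ = ((1 + (1/2 : ℝ) ^ (n - n/2)) ^ n - 1) *
              (Nat.card (SimpleGraph (Fin n)) : ℝ) := mul_comm _ _
    linarith
  have hg : Tendsto (fun n : ℕ => 1 - ((1 + (1/2 : ℝ) ^ (n - n/2)) ^ n - 1))
      atTop (nhds 1) := by
    have := (tendsto_const_nhds :
      Tendsto (fun _ : ℕ => (1:ℝ)) atTop (nhds 1)).sub bound_tendsto_zero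
    simpa using this
  refine tendsto_of_tendsto_of_tendsto_of_le_of_le' hg tendsto_const_nhds ?_ ?_
  · filter_upwards [eventually_ne_atTop 0] with n hn
    exact hlb n hn
  · exact Eventually.of_forall hub
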